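/- arXiv:1308.3151 — 2 statements merged into one kernel-verified Lean document; each statement's English description precedes it below -/
import Mathlib

section
/- Let P(z) = z + P_d(z) + O(‖z‖^{d+1}) be a polynomial map on ℂ^{2n} where P_d is homogeneous of degree d ≥ 2. Then P*ω − ω vanishes to order d at the origin if and only if the 1-form P_d ⌟ ω is closed, i.e., if and only if P_d is a Hamiltonian vector field. -/
noncomputable section

open MvPolynomial Asymptotics

/-- The standard symplectic form on `ℂ^{2n}`, with coordinates indexed by
`Fin n ⊕ Fin n` (the first `n` coordinates are `Sum.inl`, the last `n` are `Sum.inr`). -/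
def stdSymp (n : ℕ) (u v : Fin n ⊕ Fin n → ℂ) : ℂ :=
  ∑ j : Fin n, (u (Sum.inl j) * v (Sum.inr j) - u (Sum.inr j) * v (Sum.inl j))

set_option linter.unusedSectionVars false
variable {ι : Type*} [Fintype ι] [DecidableEq ι]

/-- degree of a monomial exponent -/
def mdeg (m : ι →₀ ℕ) : ℕ := m.sum fun _ e => e

lemma mdeg_add (a b : ι →₀ ℕ) : mdeg (a + b) = mdeg a + mdeg b := by
  simp [mdeg, Finsupp.sum_add_index]

lemma mdeg_mono {a b : ι →₀ ℕ} (h : a ≤ b) : mdeg a ≤ mdeg b := by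
  obtain ⟨c, rfl⟩ := le_iff_exists_add.mp h
  simp [mdeg_add]

/-- every monomial of `p` has degree at least `N` -/
def MinDeg (p : MvPolynomial ι ℂ) (N : ℕ) : Prop := ∀ m ∈ p.support, N ≤ mdeg m

lemma mdeg_single (k : ι) (e : ℕ) : mdeg (Finsupp.single k e) = e := by
  simp [mdeg]

lemma minDeg_zero {N : ℕ} : MinDeg (0 : MvPolynomial ι ℂ) N := by
  intro m hm; simp at hm

lemma minDeg_C (a : ℂ) : MinDeg (C a : MvPolynomial ι ℂ) 0 := fun m _ => Nat.zero_le _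

lemma minDeg_mono {p : MvPolynomial ι ℂ} {N M : ℕ} (h : MinDeg p N) (hle : M ≤ N) :
    MinDeg p M := fun m hm => hle.trans (h m hm)

lemma minDeg_add {p q : MvPolynomial ι ℂ} {N : ℕ} (hp : MinDeg p N) (hq : MinDeg q N) :
    MinDeg (p + q) N := by
  intro m hm
  rcases Finset.mem_union.mp (MvPolynomial.support_add hm) with h | h
  exacts [hp m h, hq m h]

lemma minDeg_sum {α : Type*} (s : Finset α) (g : α → MvPolynomial ι ℂ) {N : ℕ}
    (h : ∀ a ∈ s, MinDeg (g a) N) : MinDeg (∑ a ∈ s, g a) N := by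
  classical
  induction s using Finset.induction_on with
  | empty => simpa using minDeg_zero
  | insert a s hx ih =>
    rw [Finset.sum_insert hx]
    exact minDeg_add (h a (Finset.mem_insert_self a s))
      (ih fun b hb => h b (Finset.mem_insert_of_mem hb))

lemma minDeg_mul {p q : MvPolynomial ι ℂ} {N M : ℕ} (hp : MinDeg p N) (hq : MinDeg q M) :
    MinDeg (p * q) (N + M) := by
  intro m hm
  obtain ⟨a, ha, b, hb, rfl⟩ := Finset.mem_add.mp (MvPolynomial.support_mul _ _ hm)
  rw [mdeg_add]
  exact Nat.add_le_add (hp a ha) (hq b hb)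

lemma minDeg_pderiv {p : MvPolynomial ι ℂ} {N : ℕ} (hp : MinDeg p N) (k : ι) :
    MinDeg (pderiv k p) (N - 1) := by
  intro m hm
  -- pderiv k p = sum over support of monomials
  have hrep : pderiv k p = ∑ s ∈ p.support, monomial (s - Finsupp.single k 1) (coeff s p * s k) := by
    conv_lhs => rw [p.as_sum]
    rw [map_sum]
    exact Finset.sum_congr rfl fun s _ => pderiv_monomial
  rw [hrep] at hm
  have := MvPolynomial.support_sum hm
  rw [Finset.mem_biUnion] at this
  obtain ⟨s, hs, hms⟩ := this
  have hm' : m = s - Finsupp.single k 1 := by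
    by_cases h : (coeff s p * (s k : ℂ)) = 0
    · simp [h] at hms
    · have hc : coeff m (monomial (s - Finsupp.single k 1) (coeff s p * (s k : ℂ))) ≠ 0 :=
        Finsupp.mem_support_iff.mp hms
      rw [coeff_monomial] at hc
      by_contra hne
      rw [if_neg (fun he => hne he.symm)] at hc
      exact hc rfl
  subst hm'
  have h1 : s ≤ (s - Finsupp.single k 1) + Finsupp.single k 1 := le_tsub_add
  have h2 := mdeg_mono h1
  rw [mdeg_add, mdeg_single] at h2
  have h3 := hp s hs
  omega

lemma minDeg_of_isHomogeneous {p : MvPolynomial ι ℂ} {N : ℕ} (hp : p.IsHomogeneous N) :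
    MinDeg p N := by
  intro m hm
  rw [MvPolynomial.mem_support_iff] at hm
  have h := hp hm
  simp only [mdeg]
  rw [← h]
  simp [Finsupp.weight_apply, Finsupp.sum, mul_comm]

lemma single_add_tsub {s : ι →₀ ℕ} {k : ι} (h : 1 ≤ s k) :
    Finsupp.single k 1 + (s - Finsupp.single k 1) = s := by
  ext i
  rcases eq_or_ne i k with rfl | hik
  · simp only [Finsupp.add_apply, Finsupp.tsub_apply, Finsupp.single_apply, eq_self_iff_true, if_true]
    omega
  · simp [Finsupp.add_apply, Finsupp.tsub_apply, Finsupp.single_apply, Ne.symm hik]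

lemma X_mul_pderiv_monomial (k : ι) (s : ι →₀ ℕ) (a : ℂ) :
    X k * pderiv k (monomial s a) = monomial s (a * s k) := by
  rw [pderiv_monomial]
  rcases Nat.eq_zero_or_pos (s k) with h | h
  · simp [h]
  · rw [X, monomial_mul, one_mul, single_add_tsub h]

/-- Euler's identity for homogeneous polynomials. -/
lemma euler_identity {p : MvPolynomial ι ℂ} {N : ℕ} (hp : p.IsHomogeneous N) :
    ∑ k : ι, X k * pderiv k p = C (N : ℂ) * p := by
  conv_lhs => rw [p.as_sum]
  conv_rhs => rw [p.as_sum]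
  simp only [map_sum, Finset.mul_sum]
  rw [Finset.sum_comm]
  refine Finset.sum_congr rfl fun s hs => ?_
  have hdeg : (∑ k : ι, (s k : ℂ)) = (N : ℂ) := by
    have h := hp (MvPolynomial.mem_support_iff.mp hs)
    have : s.sum (fun _ e => e) = N := by
      rw [← h]; simp [Finsupp.weight_apply, Finsupp.sum, mul_comm]
    rw [← this, Finsupp.sum]
    rw [Finset.sum_subset (Finset.subset_univ s.support)]
    · push_cast; rfl
    · intro x _ hx
      simp [Finsupp.notMem_support_iff.mp hx]
  calc ∑ k : ι, X k * pderiv k (monomial s (coeff s p))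
      = ∑ k : ι, monomial s (coeff s p * (s k : ℂ)) := by
        exact Finset.sum_congr rfl fun k _ => X_mul_pderiv_monomial k s _
    _ = monomial s (coeff s p * ∑ k : ι, (s k : ℂ)) := by
        rw [Finset.mul_sum, map_sum]
    _ = C (N : ℂ) * monomial s (coeff s p) := by
        rw [hdeg, C_mul_monomial, mul_comm]

lemma pderiv_comm (k l : ι) (p : MvPolynomial ι ℂ) :
    pderiv k (pderiv l p) = pderiv l (pderiv k p) := by
  induction p using MvPolynomial.induction_on' with
  | add p q hp hq => simp [hp, hq]
  | monomial s a =>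
    rcases eq_or_ne k l with rfl | hkl
    · rfl
    simp only [pderiv_monomial]
    rw [tsub_right_comm]
    congr 1
    have h1 : ((s - Finsupp.single l 1 : ι →₀ ℕ)) k = s k := by
      simp [Finsupp.tsub_apply, Finsupp.single_apply, Ne.symm hkl]
    have h2 : ((s - Finsupp.single k 1 : ι →₀ ℕ)) l = s l := by
      simp [Finsupp.tsub_apply, Finsupp.single_apply, hkl]
    rw [h1, h2]; ring

lemma isHomogeneous_pderiv {p : MvPolynomial ι ℂ} {N : ℕ} (hp : p.IsHomogeneous N) (k : ι) :
    (pderiv k p).IsHomogeneous (N - 1) := by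
  rw [p.as_sum, map_sum]
  apply MvPolynomial.IsHomogeneous.sum
  intro s hs
  rw [pderiv_monomial]
  rcases Nat.eq_zero_or_pos (s k) with h | h
  · simp only [h, Nat.cast_zero, mul_zero]
    rw [map_zero (monomial _)]
    exact MvPolynomial.isHomogeneous_zero _ _ _
  · apply MvPolynomial.isHomogeneous_monomial
    have hdeg : mdeg s = N := by
      have hh := hp (MvPolynomial.mem_support_iff.mp hs)
      rw [mdeg, ← hh]; simp [Finsupp.weight_apply, Finsupp.sum, mul_comm]
    have h1 := single_add_tsub h
    have := congrArg mdeg h1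
    rw [add_comm] at this
    rw [mdeg_add, mdeg_single] at this
    have : mdeg (s - Finsupp.single k 1) = N - 1 := by omega
    simpa [Finsupp.weight_apply, Finsupp.sum, mul_comm, mdeg, Finsupp.degree_apply] using this

lemma eval_smul_of_isHomogeneous {p : MvPolynomial ι ℂ} {N : ℕ} (hp : p.IsHomogeneous N)
    (t : ℂ) (z : ι → ℂ) : eval (t • z) p = t ^ N * eval z p := by
  conv_lhs => rw [p.as_sum]
  conv_rhs => rw [p.as_sum]
  rw [map_sum, map_sum, Finset.mul_sum]
  refine Finset.sum_congr rfl fun s hs => ?_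
  have hdeg : mdeg s = N := by
    have hh := hp (MvPolynomial.mem_support_iff.mp hs)
    rw [mdeg, ← hh]; simp [Finsupp.weight_apply, Finsupp.sum, mul_comm]
  rw [eval_monomial, eval_monomial]
  have : (s.prod fun i e => (t • z) i ^ e) = t ^ N * s.prod fun i e => z i ^ e := by
    rw [← hdeg, mdeg, Finsupp.prod, Finsupp.sum, Finsupp.prod]
    calc (∏ i ∈ s.support, (t • z) i ^ s i)
        = ∏ i ∈ s.support, (t ^ s i * z i ^ s i) :=
          Finset.prod_congr rfl fun i _ => by simp [mul_pow]
      _ = (∏ i ∈ s.support, t ^ s i) * ∏ i ∈ s.support, z i ^ s i := Finset.prod_mul_distrib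
      _ = t ^ (∑ i ∈ s.support, s i) * ∏ i ∈ s.support, z i ^ s i := by
          rw [Finset.prod_pow_eq_pow_sum]
  rw [this]; ring

open Filter in
/-- If all monomials of `q` have degree at least `N`, then `eval · q = O(‖z‖^N)` at `0`. -/
lemma isBigO_eval {q : MvPolynomial ι ℂ} {N : ℕ} (hq : MinDeg q N) :
    (fun z : ι → ℂ => eval z q) =O[nhds 0] fun z => ‖z‖ ^ N := by
  rw [Asymptotics.isBigO_iff]
  refine ⟨∑ m ∈ q.support, ‖coeff m q‖, ?_⟩
  have hball : Metric.closedBall (0 : ι → ℂ) 1 ∈ nhds (0 : ι → ℂ) :=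
    Metric.closedBall_mem_nhds 0 one_pos
  filter_upwards [hball] with z hz
  rw [Metric.mem_closedBall, dist_zero_right] at hz
  have hz0 : (0:ℝ) ≤ ‖z‖ := norm_nonneg z
  conv_lhs => rw [q.as_sum]
  rw [map_sum]
  refine (norm_sum_le _ _).trans ?_
  rw [Finset.sum_mul]
  refine Finset.sum_le_sum fun m hm => ?_
  rw [eval_monomial, norm_mul]
  refine mul_le_mul_of_nonneg_left ?_ (norm_nonneg _)
  have h1 : ‖m.prod fun i e => z i ^ e‖ ≤ ‖z‖ ^ mdeg m := by
    rw [Finsupp.prod, mdeg, Finsupp.sum, ← Finset.prod_pow_eq_pow_sum]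
    rw [norm_prod]
    refine Finset.prod_le_prod (fun i _ => norm_nonneg _) fun i _ => ?_
    rw [norm_pow]
    exact pow_le_pow_left₀ (norm_nonneg _) (norm_le_pi_norm z i) _
  refine h1.trans ?_
  rw [norm_pow, Real.norm_of_nonneg hz0]
  exact pow_le_pow_of_le_one hz0 hz (hq m hm)

/-- sum of scaled projections applied -/
lemma sumProj_apply (c : ι → ℂ) (u : ι → ℂ) :
    (∑ m : ι, c m • ContinuousLinearMap.proj (R := ℂ) (φ := fun _ : ι => ℂ) m) u
      = ∑ m : ι, c m * u m := by
  simp [ContinuousLinearMap.sum_apply]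

/-- derivative of polynomial evaluation -/
lemma hasFDerivAt_eval (p : MvPolynomial ι ℂ) (z : ι → ℂ) :
    HasFDerivAt (𝕜 := ℂ) (fun z : ι → ℂ => eval z p)
      (∑ m : ι, eval z (pderiv m p) • ContinuousLinearMap.proj m) z := by
  induction p using MvPolynomial.induction_on with
  | C a =>
    have h0 : (∑ m : ι, eval z (pderiv m (C a : MvPolynomial ι ℂ)) • ContinuousLinearMap.proj m)
        = (0 : (ι → ℂ) →L[ℂ] ℂ) := by
      ext u
      rw [sumProj_apply]
      simp
    have h1 : (fun z : ι → ℂ => eval z (C a : MvPolynomial ι ℂ)) = fun _ => a := by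
      funext w; simp
    rw [h0, h1]
    exact hasFDerivAt_const (𝕜 := ℂ) a z
  | add p q hp hq =>
    have h0 : (∑ m : ι, eval z (pderiv m (p + q)) • ContinuousLinearMap.proj m)
        = (∑ m : ι, eval z (pderiv m p) • ContinuousLinearMap.proj m)
          + (∑ m : ι, eval z (pderiv m q) • ContinuousLinearMap.proj
              (R := ℂ) (φ := fun _ : ι => ℂ) m) := by
      ext u
      rw [ContinuousLinearMap.add_apply, sumProj_apply, sumProj_apply, sumProj_apply,
        ← Finset.sum_add_distrib]
      exact Finset.sum_congr rfl fun m _ => by simp [add_mul]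
    have h1 : (fun z : ι → ℂ => eval z (p + q))
        = fun z : ι → ℂ => eval z p + eval z q := by
      funext w; simp
    rw [h0, h1]
    exact HasFDerivAt.add hp hq
  | mul_X p i hp =>
    have hX : HasFDerivAt (fun z : ι → ℂ => z i)
        (ContinuousLinearMap.proj (R := ℂ) (φ := fun _ : ι => ℂ) i) z :=
      (ContinuousLinearMap.proj (R := ℂ) (φ := fun _ : ι => ℂ) i).hasFDerivAt
    have key := hp.mul' hX
    have h1 : (fun z : ι → ℂ => eval z (p * X i)) = fun z : ι → ℂ => eval z p * z i := by
      funext w; simp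
    have h0 : (∑ m : ι, eval z (pderiv m (p * X i)) • ContinuousLinearMap.proj m)
        = eval z p • (ContinuousLinearMap.proj (R := ℂ) (φ := fun _ : ι => ℂ) i)
          + (∑ m : ι, eval z (pderiv m p) • ContinuousLinearMap.proj
              (R := ℂ) (φ := fun _ : ι => ℂ) m).smulRight (z i) := by
      ext u
      rw [ContinuousLinearMap.add_apply, ContinuousLinearMap.smulRight_apply, sumProj_apply,
        sumProj_apply]
      have step : ∀ m : ι, eval z (pderiv m (p * X i)) * u m
          = eval z (pderiv m p) * u m * z i + (if i = m then eval z p * u i else 0) := by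
        intro m
        rw [pderiv_mul]
        rcases eq_or_ne i m with rfl | him
        · simp; ring
        · simp [pderiv_X_of_ne (Ne.symm him), him]; ring
      rw [Finset.sum_congr rfl fun m _ => step m, Finset.sum_add_distrib,
        Finset.sum_ite_eq Finset.univ i (fun _ => eval z p * u i)]
      simp only [ContinuousLinearMap.smul_apply, ContinuousLinearMap.proj_apply, smul_eq_mul,
        Finset.mem_univ, if_true, Finset.sum_mul]
      ring
    rw [h0, h1]
    exact key

open Filter in
lemma eq_zero_of_isBigO_of_homogeneous {Q : MvPolynomial ι ℂ} {D d : ℕ}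
    (hQ : Q.IsHomogeneous D) (hDd : D < d)
    (h : (fun z : ι → ℂ => eval z Q) =O[nhds 0] fun z => ‖z‖ ^ d) : Q = 0 := by
  apply MvPolynomial.funext
  intro z₀
  rw [map_zero]
  rw [Asymptotics.isBigO_iff] at h
  obtain ⟨C, hC⟩ := h
  rw [Metric.eventually_nhds_iff] at hC
  obtain ⟨ε, hε, hball⟩ := hC
  by_contra hne
  have hz0 : (0:ℝ) < ‖eval z₀ Q‖ := norm_pos_iff.mpr hne
  set K : ℝ := |C| * (‖z₀‖ + 1) ^ d with hK
  have hKnn : 0 ≤ K := by positivity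
  have key : ∀ t : ℝ, 0 < t → t * (‖z₀‖ + 1) < ε →
      ‖eval z₀ Q‖ ≤ K * t ^ (d - D) := by
    intro t ht htε
    have hz : dist ((t : ℂ) • z₀) 0 < ε := by
      rw [dist_zero_right, norm_smul, Complex.norm_real, Real.norm_of_nonneg ht.le]
      calc t * ‖z₀‖ ≤ t * (‖z₀‖ + 1) := by nlinarith [norm_nonneg z₀]
        _ < ε := htε
    have hb := hball hz
    rw [eval_smul_of_isHomogeneous hQ] at hb
    rw [norm_mul, norm_pow, Complex.norm_real, Real.norm_of_nonneg ht.le, norm_smul,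
      Complex.norm_real, Real.norm_of_nonneg ht.le, norm_pow, Real.norm_of_nonneg
      (by positivity : (0:ℝ) ≤ t * ‖z₀‖), mul_pow] at hb
    have htD : (0:ℝ) < t ^ D := pow_pos ht D
    have hCK : C * (t ^ d * ‖z₀‖ ^ d) ≤ K * t ^ d := by
      have h1 : C * (t ^ d * ‖z₀‖ ^ d) ≤ |C| * (t ^ d * ‖z₀‖ ^ d) := by
        have : (0:ℝ) ≤ t ^ d * ‖z₀‖ ^ d := by positivity
        nlinarith [le_abs_self C]
      refine h1.trans ?_
      rw [hK]
      have h2 : ‖z₀‖ ^ d ≤ (‖z₀‖ + 1) ^ d :=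
        pow_le_pow_left₀ (norm_nonneg _) (by linarith) d
      have h3 : (0:ℝ) ≤ t ^ d := by positivity
      nlinarith [mul_le_mul_of_nonneg_left h2 (mul_nonneg (abs_nonneg C) h3)]
    have h2 : t ^ D * ‖eval z₀ Q‖ ≤ t ^ D * (K * t ^ (d - D)) := by
      have hdd : D + (d - D) = d := by omega
      calc t ^ D * ‖eval z₀ Q‖ ≤ C * (t ^ d * ‖z₀‖ ^ d) := hb
        _ ≤ K * t ^ d := hCK
        _ = t ^ D * (K * t ^ (d - D)) := by rw [← hdd, pow_add]; ring_nf; rw [Nat.add_sub_cancel_left]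
    exact (mul_le_mul_iff_right₀ htD).mp h2
  -- choose small t for a contradiction
  set δ : ℝ := ε / (‖z₀‖ + 1) with hδ
  have hδ0 : 0 < δ := div_pos hε (by positivity)
  set t : ℝ := min 1 (min (δ/2) (‖eval z₀ Q‖ / (2 * (K + 1)))) with htdef
  have ht0 : 0 < t := by
    apply lt_min one_pos
    apply lt_min (by linarith)
    positivity
  have ht1 : t ≤ 1 := min_le_left _ _
  have htδ : t ≤ δ/2 := le_trans (min_le_right _ _) (min_le_left _ _)
  have htQ : t ≤ ‖eval z₀ Q‖ / (2 * (K + 1)) := le_trans (min_le_right _ _) (min_le_right _ _)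
  have hεlt : t * (‖z₀‖ + 1) < ε := by
    have : t < δ := by linarith
    calc t * (‖z₀‖ + 1) < δ * (‖z₀‖ + 1) := by nlinarith [norm_nonneg z₀]
      _ = ε := by rw [hδ]; field_simp
  have hkey := key t ht0 hεlt
  have hm : 1 ≤ d - D := by omega
  have htm : t ^ (d - D) ≤ t := by
    calc t ^ (d - D) ≤ t ^ 1 := pow_le_pow_of_le_one ht0.le ht1 hm
      _ = t := pow_one t
  have : K * t ^ (d - D) ≤ (K + 1) * t := by nlinarith
  have hfin : ‖eval z₀ Q‖ ≤ (K + 1) * t := le_trans hkey this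
  have : (K + 1) * t ≤ ‖eval z₀ Q‖ / 2 := by
    have h2 : (0:ℝ) < 2 * (K + 1) := by linarith
    calc (K + 1) * t ≤ (K + 1) * (‖eval z₀ Q‖ / (2 * (K + 1))) := by nlinarith
      _ = ‖eval z₀ Q‖ / 2 := by field_simp
  linarith

lemma minDeg_sub {p q : MvPolynomial ι ℂ} {N : ℕ} (hp : MinDeg p N) (hq : MinDeg q N) :
    MinDeg (p - q) N := by
  rw [sub_eq_add_neg]
  refine minDeg_add hp ?_
  intro m hm
  rw [MvPolynomial.mem_support_iff] at hm
  apply hq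
  rw [MvPolynomial.mem_support_iff]
  simpa using hm

section main
variable {n : ℕ}
local notation "ιn" => (Fin n ⊕ Fin n)

def cPoly (u : ιn → ℂ) : ιn → MvPolynomial ιn ℂ := fun k => C (u k)

def dAl (Q : ιn → MvPolynomial ιn ℂ) (u : ιn → ℂ) : ιn → MvPolynomial ιn ℂ :=
  fun k => ∑ m : ιn, pderiv m (Q k) * C (u m)

def Wp (p q : ιn → MvPolynomial ιn ℂ) : MvPolynomial ιn ℂ :=
  ∑ j : Fin n, (p (Sum.inl j) * q (Sum.inr j) - p (Sum.inr j) * q (Sum.inl j))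

lemma Wp_add_left (p p' q : ιn → MvPolynomial ιn ℂ) :
    Wp (fun k => p k + p' k) q = Wp p q + Wp p' q := by
  simp only [Wp, ← Finset.sum_add_distrib]
  exact Finset.sum_congr rfl fun j _ => by ring

lemma Wp_add_right (p q q' : ιn → MvPolynomial ιn ℂ) :
    Wp p (fun k => q k + q' k) = Wp p q + Wp p q' := by
  simp only [Wp, ← Finset.sum_add_distrib]
  exact Finset.sum_congr rfl fun j _ => by ring

lemma eval_Wp (p q : ιn → MvPolynomial ιn ℂ) (z : ιn → ℂ) :
    eval z (Wp p q) = stdSymp n (fun k => eval z (p k)) (fun k => eval z (q k)) := by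
  simp [Wp, stdSymp]

lemma Wp_cc (u v : ιn → ℂ) : Wp (cPoly u) (cPoly v) = C (stdSymp n u v) := by
  simp [Wp, cPoly, stdSymp, map_sum]

lemma minDeg_Wp {p q : ιn → MvPolynomial ιn ℂ} {s t : ℕ}
    (hp : ∀ k, MinDeg (p k) s) (hq : ∀ k, MinDeg (q k) t) : MinDeg (Wp p q) (s + t) := by
  refine minDeg_sum _ _ fun j _ => minDeg_sub ?_ ?_ <;>
    exact minDeg_mul (hp _) (hq _)

lemma minDeg_cPoly (u : ιn → ℂ) (k : ιn) : MinDeg (cPoly u k) 0 := minDeg_C _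

lemma minDeg_dAl {Q : ιn → MvPolynomial ιn ℂ} {N : ℕ} (hQ : ∀ k, MinDeg (Q k) N)
    (u : ιn → ℂ) (k : ιn) : MinDeg (dAl Q u k) (N - 1) := by
  refine minDeg_sum _ _ fun m _ => ?_
  have := minDeg_mul (minDeg_pderiv (hQ k) m) (minDeg_C (u m))
  simpa using this

def fOf (Pd : ιn → MvPolynomial ιn ℂ) : ιn → MvPolynomial ιn ℂ :=
  Sum.elim (fun j => -Pd (Sum.inr j)) fun j => Pd (Sum.inl j)

lemma Gpoly_A (Pd : ιn → MvPolynomial ιn ℂ) (u v : ιn → ℂ) :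
    Wp (dAl Pd u) (cPoly v)
      = ∑ l : ιn, ∑ k : ιn, pderiv k (fOf Pd l) * C (u k * v l) := by
  rw [Fintype.sum_sum_type, ← Finset.sum_add_distrib]
  unfold Wp dAl cPoly fOf
  refine Finset.sum_congr rfl fun j _ => ?_
  simp only [Sum.elim_inl, Sum.elim_inr, map_neg, neg_mul, Finset.sum_mul, map_mul,
    Finset.sum_neg_distrib, mul_assoc]
  rw [sub_eq_add_neg, add_comm]

lemma Gpoly_B (Pd : ιn → MvPolynomial ιn ℂ) (u v : ιn → ℂ) :
    Wp (cPoly u) (dAl Pd v)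
      = - ∑ k : ιn, ∑ l : ιn, pderiv l (fOf Pd k) * C (u k * v l) := by
  have key : ∑ k : ιn, ∑ l : ιn, pderiv l (fOf Pd k) * C (u k * v l)
      = - Wp (cPoly u) (dAl Pd v) := by
    calc ∑ k : ιn, ∑ l : ιn, pderiv l (fOf Pd k) * C (u k * v l)
        = ∑ j : Fin n, (∑ l : ιn, pderiv l (fOf Pd (Sum.inl j)) * C (u (Sum.inl j) * v l))
          + ∑ j : Fin n, (∑ l : ιn, pderiv l (fOf Pd (Sum.inr j)) * C (u (Sum.inr j) * v l)) :=
          Fintype.sum_sum_type _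
      _ = ∑ j : Fin n, ((∑ l : ιn, pderiv l (fOf Pd (Sum.inl j)) * C (u (Sum.inl j) * v l))
          + ∑ l : ιn, pderiv l (fOf Pd (Sum.inr j)) * C (u (Sum.inr j) * v l)) :=
          Finset.sum_add_distrib.symm
      _ = - Wp (cPoly u) (dAl Pd v) := ?_
    unfold Wp dAl cPoly fOf
    rw [← Finset.sum_neg_distrib]
    refine Finset.sum_congr rfl fun j _ => ?_
    simp only [Sum.elim_inl, Sum.elim_inr, map_neg, neg_mul, Finset.mul_sum, map_mul,
      Finset.sum_neg_distrib, neg_sub, mul_assoc]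
    rw [neg_add_eq_sub]
    refine congrArg₂ (· - ·) ?_ ?_
    · exact Finset.sum_congr rfl fun l _ => by ring
    · exact Finset.sum_congr rfl fun l _ => by ring
  rw [key, neg_neg]
lemma Gpoly_eq (Pd : ιn → MvPolynomial ιn ℂ) (u v : ιn → ℂ) :
    Wp (dAl Pd u) (cPoly v) + Wp (cPoly u) (dAl Pd v)
      = ∑ k : ιn, ∑ l : ιn, (pderiv k (fOf Pd l) - pderiv l (fOf Pd k)) * C (u k * v l) := by
  rw [Gpoly_A, Gpoly_B]
  simp only [sub_mul, Finset.sum_sub_distrib]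
  rw [Finset.sum_comm]
  ring

lemma fderivP (Pd R : ιn → MvPolynomial ιn ℂ) (z u : ιn → ℂ) :
    fderiv ℂ (fun (z : ιn → ℂ) (k : ιn) => z k + eval z (Pd k) + eval z (R k)) z u
      = fun k => eval z (cPoly u k + dAl Pd u k + dAl R u k) := by
  have hcomp : ∀ k : ιn, HasFDerivAt (𝕜 := ℂ)
      (fun z : ιn → ℂ => z k + eval z (Pd k) + eval z (R k))
      (ContinuousLinearMap.proj k
        + (∑ m : ιn, eval z (pderiv m (Pd k)) • ContinuousLinearMap.proj m)
        + (∑ m : ιn, eval z (pderiv m (R k)) • ContinuousLinearMap.proj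
            (R := ℂ) (φ := fun _ : ιn => ℂ) m)) z := fun k =>
    (((ContinuousLinearMap.proj (R := ℂ) (φ := fun _ : ιn => ℂ) k).hasFDerivAt).add
      (hasFDerivAt_eval (Pd k) z)).add (hasFDerivAt_eval (R k) z)
  have hP : HasFDerivAt (𝕜 := ℂ)
      (fun (z : ιn → ℂ) (k : ιn) => z k + eval z (Pd k) + eval z (R k))
      (ContinuousLinearMap.pi fun k => ContinuousLinearMap.proj k
        + (∑ m : ιn, eval z (pderiv m (Pd k)) • ContinuousLinearMap.proj m)
        + (∑ m : ιn, eval z (pderiv m (R k)) • ContinuousLinearMap.proj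
            (R := ℂ) (φ := fun _ : ιn => ℂ) m)) z := by
    apply hasFDerivAt_pi''
    intro k
    rw [ContinuousLinearMap.proj_pi]
    exact hcomp k
  rw [hP.fderiv]
  funext k
  rw [ContinuousLinearMap.pi_apply, ContinuousLinearMap.add_apply,
    ContinuousLinearMap.add_apply, sumProj_apply, sumProj_apply]
  simp only [cPoly, dAl, map_add, map_sum, eval_mul, eval_C, ContinuousLinearMap.proj_apply]

lemma Wp_expand (a b c a' b' c' : ιn → MvPolynomial ιn ℂ) :
    Wp (fun k => a k + b k + c k) (fun k => a' k + b' k + c' k)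
      = Wp a a' + Wp a b' + Wp a c' + Wp b a' + Wp b b' + Wp b c'
        + Wp c a' + Wp c b' + Wp c c' := by
  simp only [Wp, ← Finset.sum_add_distrib]
  exact Finset.sum_congr rfl fun j _ => by ring

end main

/-- Let `P(z) = z + P_d(z) + R(z)` be a polynomial map on `ℂ^{2n}`, where
the components of `P_d` are homogeneous of degree `d ≥ 2` and all monomials of `R` have
degree `≥ d+1`.  Then `P*ω − ω` vanishes to order `d` at the origin iff the 1-form
`P_d ⌟ ω` is closed, which holds iff `P_d` is a Hamiltonian vector field
(`P_d ⌟ ω = dH` for a polynomial `H`). -/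
theorem pullback_symplectic_to_order_iff_hamiltonian (n d : ℕ) (hd : 2 ≤ d)
    (Pd R : Fin n ⊕ Fin n → MvPolynomial (Fin n ⊕ Fin n) ℂ)
    (hPd : ∀ k, (Pd k).IsHomogeneous d)
    (hR : ∀ k, ∀ m ∈ (R k).support, d + 1 ≤ m.sum fun _ e => e) :
    -- the coefficients of the 1-form `P_d ⌟ ω`
    let f : Fin n ⊕ Fin n → MvPolynomial (Fin n ⊕ Fin n) ℂ :=
      Sum.elim (fun j => -Pd (Sum.inr j)) fun j => Pd (Sum.inl j)
    -- the map `P`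
    let P : (Fin n ⊕ Fin n → ℂ) → (Fin n ⊕ Fin n → ℂ) :=
      fun z k => z k + eval z (Pd k) + eval z (R k)
    ((∀ u v : Fin n ⊕ Fin n → ℂ,
        (fun z => stdSymp n (fderiv ℂ P z u) (fderiv ℂ P z v) - stdSymp n u v)
          =O[nhds 0] fun z : Fin n ⊕ Fin n → ℂ => ‖z‖ ^ d)
      ↔ ∀ k l : Fin n ⊕ Fin n, pderiv k (f l) = pderiv l (f k)) ∧
    ((∀ k l : Fin n ⊕ Fin n, pderiv k (f l) = pderiv l (f k))
      ↔ ∃ H : MvPolynomial (Fin n ⊕ Fin n) ℂ, ∀ k, f k = pderiv k H) := by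
  intro f P
  classical
  have hf : f = fOf Pd := rfl
  have hP : P = fun z k => z k + eval z (Pd k) + eval z (R k) := rfl
  have hf' : ∀ k, (f k).IsHomogeneous d := by
    intro k
    cases k with
    | inl j => exact (hPd (Sum.inr j)).neg
    | inr j => exact hPd (Sum.inl j)
  -- min-degree facts
  have hmPd : ∀ k, MinDeg (Pd k) d := fun k => minDeg_of_isHomogeneous (hPd k)
  have hmR : ∀ k, MinDeg (R k) (d + 1) := hR
  have hmdPd : ∀ (u : Fin n ⊕ Fin n → ℂ) k, MinDeg (dAl Pd u k) (d - 1) :=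
    fun u k => minDeg_dAl hmPd u k
  have hmdR : ∀ (u : Fin n ⊕ Fin n → ℂ) k, MinDeg (dAl R u k) d := by
    intro u k
    have := minDeg_dAl hmR u k
    simpa using this
  -- the error part
  set Ep : (Fin n ⊕ Fin n → ℂ) → (Fin n ⊕ Fin n → ℂ) → MvPolynomial (Fin n ⊕ Fin n) ℂ :=
    fun u v => Wp (dAl Pd u) (dAl Pd v) + Wp (cPoly u) (dAl R v) + Wp (dAl R u) (cPoly v)
      + Wp (dAl Pd u) (dAl R v) + Wp (dAl R u) (dAl Pd v) + Wp (dAl R u) (dAl R v) with hEp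
  set Gp : (Fin n ⊕ Fin n → ℂ) → (Fin n ⊕ Fin n → ℂ) → MvPolynomial (Fin n ⊕ Fin n) ℂ :=
    fun u v => ∑ k : Fin n ⊕ Fin n, ∑ l : Fin n ⊕ Fin n,
      (pderiv k (f l) - pderiv l (f k)) * C (u k * v l) with hGp
  have hEpd : ∀ u v, MinDeg (Ep u v) d := by
    intro u v
    rw [hEp]
    refine minDeg_add (minDeg_add (minDeg_add (minDeg_add (minDeg_add ?_ ?_) ?_) ?_) ?_) ?_
    · exact minDeg_mono (minDeg_Wp (hmdPd u) (hmdPd v)) (by omega)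
    · exact minDeg_mono (minDeg_Wp (minDeg_cPoly u) (hmdR v)) (by omega)
    · exact minDeg_mono (minDeg_Wp (hmdR u) (minDeg_cPoly v)) (by omega)
    · exact minDeg_mono (minDeg_Wp (hmdPd u) (hmdR v)) (by omega)
    · exact minDeg_mono (minDeg_Wp (hmdR u) (hmdPd v)) (by omega)
    · exact minDeg_mono (minDeg_Wp (hmdR u) (hmdR v)) (by omega)
  have hfun : ∀ u v : Fin n ⊕ Fin n → ℂ,
      (fun z => stdSymp n (fderiv ℂ P z u) (fderiv ℂ P z v) - stdSymp n u v)
        = fun z => eval z (Gp u v + Ep u v) := by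
    intro u v
    funext z
    rw [hP, fderivP Pd R z u, fderivP Pd R z v]
    have hfull : Wp (fun k => cPoly u k + dAl Pd u k + dAl R u k)
          (fun k => cPoly v k + dAl Pd v k + dAl R v k)
        = C (stdSymp n u v) + (Gp u v + Ep u v) := by
      show _ = C (stdSymp n u v)
        + ((∑ k : Fin n ⊕ Fin n, ∑ l : Fin n ⊕ Fin n,
            (pderiv k (fOf Pd l) - pderiv l (fOf Pd k)) * C (u k * v l))
          + (Wp (dAl Pd u) (dAl Pd v) + Wp (cPoly u) (dAl R v) + Wp (dAl R u) (cPoly v)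
            + Wp (dAl Pd u) (dAl R v) + Wp (dAl R u) (dAl Pd v) + Wp (dAl R u) (dAl R v)))
      rw [Wp_expand, Wp_cc, ← Gpoly_eq Pd u v]
      abel
    have : stdSymp n (fun k => eval z (cPoly u k + dAl Pd u k + dAl R u k))
          (fun k => eval z (cPoly v k + dAl Pd v k + dAl R v k))
        = eval z (Wp (fun k => cPoly u k + dAl Pd u k + dAl R u k)
            (fun k => cPoly v k + dAl Pd v k + dAl R v k)) := (eval_Wp _ _ z).symm
    rw [this, hfull]
    simp only [map_add, eval_C]
    ring
  constructor
  · constructor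
    · -- forward of part 1
      intro h k l
      have hkl := h (Pi.single k 1) (Pi.single l 1)
      rw [hfun] at hkl
      have hE := isBigO_eval (hEpd (Pi.single k 1) (Pi.single l 1))
      have hG : (fun z : Fin n ⊕ Fin n → ℂ => eval z (Gp (Pi.single k 1) (Pi.single l 1)))
          =O[nhds 0] fun z => ‖z‖ ^ d := by
        have := hkl.sub hE
        refine this.congr_left fun z => ?_
        simp [map_add]
      have hGval : Gp (Pi.single k 1) (Pi.single l 1)
          = pderiv k (f l) - pderiv l (f k) := by
        rw [hGp]
        simp only [Pi.single_apply]
        rw [Finset.sum_eq_single k]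
        · rw [Finset.sum_eq_single l]
          · simp
          · intro b _ hb; simp [hb]
          · simp
        · intro b _ hb
          apply Finset.sum_eq_zero
          intro c _
          simp [hb]
        · simp
      rw [hGval] at hG
      have hhom : (pderiv k (f l) - pderiv l (f k)).IsHomogeneous (d - 1) :=
        (isHomogeneous_pderiv (hf' l) k).sub (isHomogeneous_pderiv (hf' k) l)
      have hz := eq_zero_of_isBigO_of_homogeneous hhom (by omega) hG
      exact sub_eq_zero.mp hz
    · -- backward of part 1
      intro hsym u v
      rw [hfun]
      have hG0 : Gp u v = 0 := by
        rw [hGp]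
        apply Finset.sum_eq_zero; intro k _
        apply Finset.sum_eq_zero; intro l _
        rw [hsym k l, sub_self, zero_mul]
      rw [hG0, zero_add]
      exact isBigO_eval (hEpd u v)
  · constructor
    · intro hsym
      have hne : ((d : ℂ) + 1) ≠ 0 := by
        have : ((d : ℂ) + 1) = ((d + 1 : ℕ) : ℂ) := by push_cast; ring
        rw [this]
        exact_mod_cast Nat.succ_ne_zero d
      refine ⟨C (((d : ℂ) + 1)⁻¹) * ∑ k : Fin n ⊕ Fin n, X k * f k, fun l => ?_⟩
      rw [pderiv_C_mul, map_sum]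
      rw [Finset.sum_congr rfl fun k (_ : k ∈ Finset.univ) =>
        (pderiv_mul : pderiv l (X k * f k) = _), Finset.sum_add_distrib]
      have h1 : ∑ k : Fin n ⊕ Fin n, pderiv l (X k) * f k = f l := by
        rw [Finset.sum_eq_single l]
        · rw [pderiv_X_self, one_mul]
        · intro b _ hb; rw [pderiv_X_of_ne hb, zero_mul]
        · simp
      have h2 : ∑ k : Fin n ⊕ Fin n, X k * pderiv l (f k) = C (d : ℂ) * f l := by
        rw [Finset.sum_congr rfl fun k (_ : k ∈ Finset.univ) => by rw [hsym l k]]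
        exact euler_identity (hf' l)
      rw [h1, h2]
      have : (f l + C (d : ℂ) * f l) = C ((d : ℂ) + 1) * f l := by
        rw [map_add, map_one]; ring
      rw [this, ← mul_assoc, ← map_mul, inv_mul_cancel₀ hne, map_one, one_mul]
    · rintro ⟨H, hH⟩ k l
      rw [hH k, hH l]
      exact pderiv_comm k l H
end
end

section
/- The vector space of degree-d homogeneous Hamiltonian polynomial vector fields on ℂ^{2n} is spanned by vector fields of the form z ↦ (Ja·z)^d · a, where a ranges over ℂ^{2n}. -/
noncomputable section

open MvPolynomial

/-- The symplectic involution `J(z) = (−z_{n+1},…,−z_{2n}, z_1,…,z_n)` on `ℂ^{2n}`,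
with coordinates indexed by `Fin n ⊕ Fin n`. -/
def Jmap (n : ℕ) (a : Fin n ⊕ Fin n → ℂ) : Fin n ⊕ Fin n → ℂ :=
  Sum.elim (fun j => -a (Sum.inr j)) fun j => a (Sum.inl j)

/-- The linear form `z ↦ Ja·z` as a polynomial. -/
def linFormJ (n : ℕ) (a : Fin n ⊕ Fin n → ℂ) : MvPolynomial (Fin n ⊕ Fin n) ℂ :=
  ∑ k, C (Jmap n a k) * X k

/-- The shear vector field `z ↦ (Ja·z)^d · a`, with polynomial components. -/
def shearField (n d : ℕ) (a : Fin n ⊕ Fin n → ℂ) :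
    Fin n ⊕ Fin n → MvPolynomial (Fin n ⊕ Fin n) ℂ :=
  fun k => linFormJ n a ^ d * C (a k)


section Aux

variable {σ : Type*} [Fintype σ] [DecidableEq σ]

lemma degree_sub_single_add (u : σ →₀ ℕ) (i : σ) (h : u i ≠ 0) :
    (u - Finsupp.single i 1).degree + 1 = u.degree := by
  have h1 : (u - Finsupp.single i 1) + Finsupp.single i 1 = u :=
    tsub_add_cancel_of_le (Finsupp.single_le_iff.mpr (Nat.one_le_iff_ne_zero.mpr h))
  have hadd : ∀ v w : σ →₀ ℕ, (v + w).degree = v.degree + w.degree := fun v w => by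
    simp [Finsupp.degree_eq_weight_one, map_add]
  have hsing : (Finsupp.single i 1).degree = 1 := by
    exact Finsupp.degree_single i 1
  conv_rhs => rw [← h1]
  rw [hadd, hsing]

lemma pderiv_homogeneousComponent (i : σ) (m : ℕ) (p : MvPolynomial σ ℂ) :
    pderiv i (homogeneousComponent (m + 1) p) = homogeneousComponent m (pderiv i p) := by
  induction p using MvPolynomial.induction_on' with
  | add p q hp hq => simp only [map_add, hp, hq]
  | monomial u c =>
    rw [homogeneousComponent_of_mem ((mem_homogeneousSubmodule _ _).mpr
      (isHomogeneous_monomial c rfl)), pderiv_monomial,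
      homogeneousComponent_of_mem ((mem_homogeneousSubmodule _ _).mpr
      (isHomogeneous_monomial _ rfl))]
    by_cases h : u i = 0
    · split <;> simp [pderiv_monomial, h]
    · have hd := degree_sub_single_add u i h
      by_cases hm : m + 1 = u.degree
      · rw [if_pos hm, if_pos (by omega), pderiv_monomial]
      · rw [if_neg hm, if_neg (by omega), map_zero]

lemma prod_X_pow_univ (u : σ →₀ ℕ) : (∏ i, X i ^ u i : MvPolynomial σ ℂ) = monomial u 1 := by
  rw [← prod_X_pow_eq_monomial]
  exact (Finset.prod_subset (Finset.subset_univ _) (by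
    intro x _ hx
    rw [Finsupp.notMem_support_iff.mp hx, pow_zero])).symm

lemma mem_span_pow_linear (m : ℕ) (p : MvPolynomial σ ℂ) (hp : p.IsHomogeneous m) :
    p ∈ Submodule.span ℂ
      (Set.range fun c : σ → ℂ => (∑ k, C (c k) * X k : MvPolynomial σ ℂ) ^ m) := by
  by_contra hmem
  obtain ⟨φ, hφp, hφ⟩ := Submodule.exists_dual_map_eq_bot_of_notMem hmem inferInstance
  have hzero : ∀ c : σ → ℂ, φ ((∑ k, C (c k) * X k : MvPolynomial σ ℂ) ^ m) = 0 := by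
    intro c
    have : (∑ k, C (c k) * X k : MvPolynomial σ ℂ) ^ m ∈ Submodule.span ℂ
        (Set.range fun c : σ → ℂ => (∑ k, C (c k) * X k : MvPolynomial σ ℂ) ^ m) :=
      Submodule.subset_span ⟨c, rfl⟩
    have h2 : φ _ ∈ Submodule.map φ (Submodule.span ℂ _) := Submodule.mem_map_of_mem this
    rw [hφ] at h2
    exact h2
  -- expand the power and turn the vanishing into a polynomial identity
  have hexp : ∀ c : σ → ℂ,
      (∑ k ∈ Finset.univ.piAntidiag m,
        (Nat.multinomial Finset.univ k : ℂ) *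
          φ (monomial (Finsupp.equivFunOnFinite.symm k) 1) * ∏ i, c i ^ k i) = 0 := by
    intro c
    rw [← hzero c, Finset.sum_pow_eq_sum_piAntidiag, map_sum]
    refine Finset.sum_congr rfl fun k hk => ?_
    have : (∏ i, (C (c i) * X i : MvPolynomial σ ℂ) ^ k i)
        = C (∏ i, c i ^ k i) * monomial (Finsupp.equivFunOnFinite.symm k) 1 := by
      rw [← prod_X_pow_univ]
      simp only [mul_pow, Finset.prod_mul_distrib, map_prod, map_pow]
      congr 1
    rw [this, ← map_natCast (C : ℂ →+* MvPolynomial σ ℂ), ← mul_assoc, ← C_mul,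
      ← smul_eq_C_mul, map_smul, smul_eq_mul]
    try ring
  -- the polynomial (in the dual variables) whose evaluations are the above sums
  set P : MvPolynomial σ ℂ := ∑ k ∈ Finset.univ.piAntidiag m,
      monomial (Finsupp.equivFunOnFinite.symm k)
        ((Nat.multinomial Finset.univ k : ℂ) * φ (monomial (Finsupp.equivFunOnFinite.symm k) 1))
    with hP
  have hPzero : P = 0 := by
    apply MvPolynomial.funext
    intro c
    rw [hP, map_sum, map_zero]
    rw [← hexp c]
    refine Finset.sum_congr rfl fun k hk => ?_
    rw [eval_monomial, Finsupp.prod_fintype _ _ fun i => pow_zero (c i)]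
    have he : ∀ i, (Finsupp.equivFunOnFinite.symm k) i = k i := fun i =>
      rfl
    simp only [he]
    try ring
  -- hence all the relevant dual values vanish
  have hmono : ∀ u : σ →₀ ℕ, u.degree = m → φ (monomial u 1) = 0 := by
    intro u hu
    have hk : ⇑u ∈ Finset.univ.piAntidiag m := by
      rw [Finset.mem_piAntidiag]
      refine ⟨?_, fun _ _ => Finset.mem_univ _⟩
      rw [← hu, Finsupp.degree]
      exact (Finset.sum_subset (Finset.subset_univ _) fun x _ hx =>
        Finsupp.notMem_support_iff.mp hx).symm
    have hcoeff := congrArg (coeff u) hPzero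
    rw [hP, coeff_zero, MvPolynomial.coeff_sum] at hcoeff
    rw [Finset.sum_eq_single (⇑u)] at hcoeff
    · rw [coeff_monomial, if_pos (Finsupp.equivFunOnFinite_symm_coe u)] at hcoeff
      rcases mul_eq_zero.mp hcoeff with h | h
      · exact absurd h (by exact_mod_cast (Nat.multinomial_pos _ _).ne')
      · rwa [Finsupp.equivFunOnFinite_symm_coe] at h
    · intro k _ hk
      rw [coeff_monomial, if_neg]
      intro hEq
      apply hk
      have h2 : Finsupp.equivFunOnFinite.symm k = Finsupp.equivFunOnFinite.symm ⇑u := by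
        rw [hEq, Finsupp.equivFunOnFinite_symm_coe]
      exact Finsupp.equivFunOnFinite.symm.injective h2
    · exact fun h => absurd hk h
  -- conclude φ p = 0, contradiction
  apply hφp
  rw [← support_sum_monomial_coeff p, map_sum]
  refine Finset.sum_eq_zero fun u hu => ?_
  have hdeg : u.degree = m := by
    have := hp (MvPolynomial.mem_support_iff.mp hu)
    rwa [Finsupp.degree_eq_weight_one]
  have : monomial u (coeff u p) = (coeff u p) • monomial u 1 := by
    rw [smul_monomial, smul_eq_mul, mul_one]
  rw [this, map_smul, hmono u hdeg, smul_zero]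

end Aux

lemma Jmap_Jmap (n : ℕ) (a : Fin n ⊕ Fin n → ℂ) : Jmap n (Jmap n a) = -a := by
  funext k; cases k <;> simp [Jmap]

/-- The map `Q ↦ J∇Q` as a linear map. -/
def Jgrad (n : ℕ) : MvPolynomial (Fin n ⊕ Fin n) ℂ →ₗ[ℂ]
    (Fin n ⊕ Fin n → MvPolynomial (Fin n ⊕ Fin n) ℂ) where
  toFun Q := Sum.elim (fun j => -(pderiv (Sum.inr j) Q)) fun j => pderiv (Sum.inl j) Q
  map_add' p q := by funext k; cases k <;> simp [map_add] <;> ring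
  map_smul' c p := by funext k; cases k <;> simp

@[simp] lemma Jgrad_inl (n : ℕ) (Q) (j : Fin n) :
    Jgrad n Q (Sum.inl j) = -(pderiv (Sum.inr j) Q) := rfl

@[simp] lemma Jgrad_inr (n : ℕ) (Q) (j : Fin n) :
    Jgrad n Q (Sum.inr j) = pderiv (Sum.inl j) Q := rfl

lemma pderiv_linFormJ (n : ℕ) (a : Fin n ⊕ Fin n → ℂ) (i : Fin n ⊕ Fin n) :
    pderiv i (linFormJ n a) = C (Jmap n a i) := by
  unfold linFormJ
  rw [map_sum, Finset.sum_eq_single i]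
  · rw [pderiv_C_mul, pderiv_X_self, mul_one]
  · intro b _ hb
    rw [pderiv_C_mul, pderiv_X_of_ne hb, mul_zero]
  · intro h; exact absurd (Finset.mem_univ i) h

lemma pderiv_linFormJ_pow (n d : ℕ) (a : Fin n ⊕ Fin n → ℂ) (i : Fin n ⊕ Fin n) :
    pderiv i (linFormJ n a ^ (d + 1))
      = C ((d : ℂ) + 1) * linFormJ n a ^ d * C (Jmap n a i) := by
  rw [pderiv_pow, pderiv_linFormJ, Nat.add_sub_cancel]
  congr 2
  push_cast
  simp

lemma Jgrad_pow (n d : ℕ) (a : Fin n ⊕ Fin n → ℂ) :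
    Jgrad n (linFormJ n a ^ (d + 1)) = (-((d : ℂ) + 1)) • shearField n d a := by
  funext k
  cases k with
  | inl j =>
    rw [Jgrad_inl, pderiv_linFormJ_pow]
    have : Jmap n a (Sum.inr j) = a (Sum.inl j) := rfl
    rw [this, Pi.smul_apply, smul_eq_C_mul]
    simp only [shearField, map_neg, map_add, map_one]
    ring
  | inr j =>
    rw [Jgrad_inr, pderiv_linFormJ_pow]
    have : Jmap n a (Sum.inl j) = -a (Sum.inr j) := rfl
    rw [this, Pi.smul_apply, smul_eq_C_mul]
    simp only [shearField, map_neg, map_add, map_one]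
    ring
/-- The space of degree-`d` homogeneous Hamiltonian polynomial vector
fields on `ℂ^{2n}` (fields of the form `J∇Q`) is spanned by the vector fields
`z ↦ (Ja·z)^d · a`, `a ∈ ℂ^{2n}`. -/
theorem hamiltonian_fields_spanned_by_shears (n d : ℕ) :
    Submodule.span ℂ
        {V : Fin n ⊕ Fin n → MvPolynomial (Fin n ⊕ Fin n) ℂ |
          (∀ k, (V k).IsHomogeneous d) ∧
          ∃ Q : MvPolynomial (Fin n ⊕ Fin n) ℂ,
            ∀ j : Fin n, V (Sum.inl j) = -pderiv (Sum.inr j) Q ∧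
              V (Sum.inr j) = pderiv (Sum.inl j) Q}
      = Submodule.span ℂ (Set.range (shearField n d)) := by
  have hne : -((d : ℂ) + 1) ≠ 0 := neg_ne_zero.mpr (Nat.cast_add_one_ne_zero d)
  apply le_antisymm
  · rw [Submodule.span_le]
    rintro V ⟨hhom, Q, hQ⟩
    set Q' := homogeneousComponent (d + 1) Q with hQ'
    have hVJ : Jgrad n Q' = V := by
      funext k
      cases k with
      | inl j =>
        rw [Jgrad_inl, hQ', pderiv_homogeneousComponent]
        have h1 : pderiv (Sum.inr j) Q = -(V (Sum.inl j)) := by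
          rw [(hQ j).1, neg_neg]
        rw [h1, map_neg, homogeneousComponent_of_mem
          ((mem_homogeneousSubmodule _ _).mpr (hhom (Sum.inl j))), if_pos rfl, neg_neg]
      | inr j =>
        rw [Jgrad_inr, hQ', pderiv_homogeneousComponent, ← (hQ j).2,
          homogeneousComponent_of_mem
          ((mem_homogeneousSubmodule _ _).mpr (hhom (Sum.inr j))), if_pos rfl]
    have hspan := mem_span_pow_linear (d + 1) Q' (homogeneousComponent_isHomogeneous _ _)
    have hrange : (Set.range fun c : Fin n ⊕ Fin n → ℂ =>
          (∑ k, C (c k) * X k : MvPolynomial (Fin n ⊕ Fin n) ℂ) ^ (d + 1))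
        ⊆ Set.range fun a => linFormJ n a ^ (d + 1) := by
      rintro _ ⟨c, rfl⟩
      refine ⟨Jmap n (-c), ?_⟩
      show linFormJ n (Jmap n (-c)) ^ (d + 1) = _
      unfold linFormJ
      simp only [Jmap_Jmap, neg_neg]
    have hmem : V ∈ Submodule.map (Jgrad n)
        (Submodule.span ℂ (Set.range fun a => linFormJ n a ^ (d + 1))) :=
      ⟨Q', Submodule.span_mono hrange hspan, hVJ⟩
    rw [Submodule.map_span] at hmem
    refine Submodule.span_le.mpr ?_ hmem
    rintro _ ⟨_, ⟨a, rfl⟩, rfl⟩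
    rw [Jgrad_pow]
    exact Submodule.smul_mem _ _ (Submodule.subset_span ⟨a, rfl⟩)
  · rw [Submodule.span_le]
    rintro _ ⟨a, rfl⟩
    apply Submodule.subset_span
    constructor
    · intro k
      have hL : (linFormJ n a).IsHomogeneous 1 := by
        apply IsHomogeneous.sum
        intro i _
        simpa using (isHomogeneous_C _ (Jmap n a i)).mul (isHomogeneous_X _ i)
      simpa [shearField] using (hL.pow d).mul (isHomogeneous_C _ (a k))
    · have hq : Jgrad n ((-((d : ℂ) + 1))⁻¹ • linFormJ n a ^ (d + 1))
          = shearField n d a := by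
        rw [map_smul, Jgrad_pow, smul_smul, inv_mul_cancel₀ hne, one_smul]
      exact ⟨(-((d : ℂ) + 1))⁻¹ • linFormJ n a ^ (d + 1), fun j =>
        ⟨(congrFun hq (Sum.inl j)).symm, (congrFun hq (Sum.inr j)).symm⟩⟩
end
end
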